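/- arXiv:2510.25525 — 2 statements merged into one kernel-verified Lean document; each statement's English description precedes it below -/
import Mathlib

section
/- For every Schwartz function φ ∈ S(ℝⁿ), the random variable ω ↦ ⟨ω,φ⟩ on (Ω,P) has variance ∫_Ω ⟨ω,φ⟩² P(dω) = M ∫_{ℝⁿ} φ(x)² dx, where M = ∫_ℝ z² ν(dz). -/
open MeasureTheory Complex

noncomputable section

/-- The space ℝⁿ. -/
abbrev En (n : ℕ) := EuclideanSpace ℝ (Fin n)

/-- The white noise probability space Ω = 𝒮'(ℝⁿ), the space of tempered
distributions (the continuous dual of the Schwartz space), with the weak* topology. -/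
abbrev WNSpace (n : ℕ) := WeakDual ℝ (SchwartzMap (En n) ℝ)

/-- The Borel σ-algebra on Ω. -/
instance (n : ℕ) : MeasurableSpace (WNSpace n) := borel _

/-- The Lévy exponent Ψ(w) = ∫ (e^{iwz} − 1 − iwz) ν(dz). -/
def levyExponent (ν : Measure ℝ) (w : ℝ) : ℂ :=
  ∫ z : ℝ, (Complex.exp (Complex.I * w * z) - 1 - Complex.I * w * z) ∂ν

open Complex Filter

lemma sq_norm_exp_I_mul_sub_one (s : ℝ) : ‖Complex.exp (I * s) - 1‖ ^ 2 = 2 - 2 * Real.cos s := by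
  rw [Complex.sq_norm, Complex.normSq_apply]
  simp [Complex.exp_re, Complex.exp_im, Complex.mul_re, Complex.mul_im]
  nlinarith [Real.sin_sq_add_cos_sq s]

lemma norm_exp_I_mul_sub_one_le (s : ℝ) : ‖Complex.exp (I * s) - 1‖ ≤ |s| := by
  have h1 : 1 - s ^ 2 / 2 ≤ Real.cos s := Real.one_sub_sq_div_two_le_cos
  have h := sq_norm_exp_I_mul_sub_one s
  nlinarith [norm_nonneg (Complex.exp (I*s) - 1), abs_nonneg s, _root_.sq_abs s]

lemma hasDerivAt_exp_I_mul (t : ℝ) :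
    HasDerivAt (fun s : ℝ => Complex.exp (I * s)) (I * Complex.exp (I * t)) t := by
  have h1 : HasDerivAt (fun s : ℝ => (s : ℂ)) 1 t := Complex.ofRealCLM.hasDerivAt
  have h2 : HasDerivAt (fun s : ℝ => I * (s : ℂ)) I t := by
    simpa using h1.const_mul I
  simpa [mul_comm] using h2.cexp

lemma g_bound_nonneg {s : ℝ} (hs : 0 ≤ s) :
    ‖Complex.exp (I * s) - 1 - I * s‖ ≤ s ^ 2 / 2 := by
  have hderiv : ∀ t ∈ Set.uIcc 0 s,
      HasDerivAt (fun u : ℝ => Complex.exp (I * u) - 1 - I * u)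
        (I * Complex.exp (I * t) - I) t := by
    intro t _
    have h1 := hasDerivAt_exp_I_mul t
    have h2 : HasDerivAt (fun u : ℝ => I * (u : ℂ)) I t := by
      simpa using (Complex.ofRealCLM.hasDerivAt (x := t)).const_mul I
    exact (h1.sub_const 1).sub h2
  have hcont : IntervalIntegrable (fun t : ℝ => I * Complex.exp (I * t) - I)
      MeasureTheory.volume 0 s := by
    apply Continuous.intervalIntegrable
    continuity
  have hftc := intervalIntegral.integral_eq_sub_of_hasDerivAt hderiv hcont
  simp only [Complex.ofReal_zero, mul_zero, Complex.exp_zero] at hftc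
  have heq : Complex.exp (I * s) - 1 - I * s
      = ∫ t in (0:ℝ)..s, (I * Complex.exp (I * t) - I) := by
    rw [hftc]; ring
  rw [heq]
  have hbound : ∀ t ∈ Set.Ioc (0:ℝ) s, ‖I * Complex.exp (I * t) - I‖ ≤ t := by
    intro t ht
    have : I * Complex.exp (I * t) - I = I * (Complex.exp (I * t) - 1) := by ring
    rw [this, norm_mul, Complex.norm_I, one_mul]
    calc ‖Complex.exp (I * t) - 1‖ ≤ |t| := norm_exp_I_mul_sub_one_le t
    _ = t := abs_of_nonneg ht.1.le
  calc ‖∫ t in (0:ℝ)..s, (I * Complex.exp (I * t) - I)‖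
      ≤ |∫ t in (0:ℝ)..s, t| := by
        apply intervalIntegral.norm_integral_le_abs_of_norm_le
        · filter_upwards [MeasureTheory.ae_restrict_mem measurableSet_Ioc] with t ht
          exact hbound t (by rwa [Set.uIoc_of_le hs] at ht)
        · exact Continuous.intervalIntegrable (by continuity) _ _
    _ = s ^ 2 / 2 := by
        rw [integral_id, _root_.abs_of_nonneg (by nlinarith)]
        ring

lemma g_bound (s : ℝ) : ‖Complex.exp (I * s) - 1 - I * s‖ ≤ s ^ 2 / 2 := by
  rcases le_or_gt 0 s with h | h
  · exact g_bound_nonneg h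
  · have h1 := g_bound_nonneg (s := -s) (by linarith)
    have hc : Complex.exp (I * ((-s : ℝ) : ℂ)) - 1 - I * ((-s : ℝ) : ℂ)
        = (starRingEnd ℂ) (Complex.exp (I * s) - 1 - I * s) := by
      rw [map_sub, map_sub, ← Complex.exp_conj, map_mul, Complex.conj_I,
        Complex.conj_ofReal, map_one]
      push_cast; ring_nf
    rw [hc, RCLike.norm_conj] at h1
    calc ‖Complex.exp (I * s) - 1 - I * s‖ ≤ (-s) ^ 2 / 2 := h1
    _ = s ^ 2 / 2 := by ring

lemma g_cubic {s : ℝ} (hs : |s| ≤ 1) :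
    ‖Complex.exp (I * s) - 1 - I * s + (s : ℂ) ^ 2 / 2‖ ≤ |s| ^ 3 * (2 / 9) := by
  have hx : ‖I * s‖ ≤ 1 := by
    simpa using hs
  have h := Complex.exp_bound hx (n := 3) (by norm_num)
  have hsum : ∑ m ∈ Finset.range 3, (I * (s : ℂ)) ^ m / m.factorial
      = 1 + I * s - (s : ℂ) ^ 2 / 2 := by
    simp [Finset.sum_range_succ]
    ring_nf
    simp [Complex.I_sq]
    ring
  rw [hsum] at h
  have habs : ‖I * s‖ = |s| := by simp
  rw [habs] at h
  calc ‖Complex.exp (I * s) - 1 - I * s + (s : ℂ) ^ 2 / 2‖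
      = ‖Complex.exp (I * s) - (1 + I * s - (s : ℂ) ^ 2 / 2)‖ := by
        ring_nf
    _ ≤ |s| ^ 3 * ((3 + 1 : ℝ) * ((3).factorial * 3 : ℝ)⁻¹) := by
        convert h using 2 <;> norm_num
    _ = |s| ^ 3 * (2 / 9) := by norm_num [Nat.factorial]

lemma g_div_sq_tendsto :
    Filter.Tendsto (fun s : ℝ => (Complex.exp (I * s) - 1 - I * s) / (s : ℂ) ^ 2)
      (nhdsWithin 0 {0}ᶜ) (nhds (-(1/2) : ℂ)) := by
  rw [← tendsto_sub_nhds_zero_iff]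
  have hb : ∀ᶠ s : ℝ in nhdsWithin 0 {0}ᶜ,
      ‖(Complex.exp (I * s) - 1 - I * s) / (s : ℂ) ^ 2 - (-(1/2))‖ ≤ |s| * (2 / 9) := by
    have h1 : ∀ᶠ s : ℝ in nhdsWithin 0 {0}ᶜ, |s| ≤ 1 := by
      have := eventually_abs_sub_lt (0 : ℝ) (one_pos)
      refine (this.mono fun s hs => ?_).filter_mono nhdsWithin_le_nhds
      rw [sub_zero] at hs; exact hs.le
    have h2 : ∀ᶠ s : ℝ in nhdsWithin 0 {0}ᶜ, s ≠ 0 :=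
      eventually_mem_nhdsWithin.mono (fun s hs => hs)
    filter_upwards [h1, h2] with s hs hs0
    have hsC : (s : ℂ) ^ 2 ≠ 0 := by
      simpa using pow_ne_zero 2 (Complex.ofReal_ne_zero.mpr hs0)
    have heq : (Complex.exp (I * s) - 1 - I * s) / (s : ℂ) ^ 2 - (-(1/2))
        = (Complex.exp (I * s) - 1 - I * s + (s : ℂ) ^ 2 / 2) / (s : ℂ) ^ 2 := by
      rw [sub_neg_eq_add, div_add' _ _ _ hsC]
      congr 1
      ring
    rw [heq, norm_div]
    have hden : ‖(s : ℂ) ^ 2‖ = s ^ 2 := by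
      rw [norm_pow, Complex.norm_real, Real.norm_eq_abs, _root_.sq_abs]
    rw [hden, div_le_iff₀ (by positivity)]
    calc ‖Complex.exp (I * s) - 1 - I * s + (s : ℂ) ^ 2 / 2‖
        ≤ |s| ^ 3 * (2 / 9) := g_cubic hs
      _ = |s| * (2 / 9) * |s| ^ 2 := by ring
      _ = |s| * (2 / 9) * s ^ 2 := by rw [_root_.sq_abs]
  have hg : Filter.Tendsto (fun s : ℝ => |s| * (2 / 9)) (nhdsWithin 0 {0}ᶜ) (nhds 0) := by
    have : Filter.Tendsto (fun s : ℝ => |s| * (2 / 9)) (nhds 0) (nhds (|0| * (2/9) : ℝ)) :=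
      Filter.Tendsto.mul_const _ continuous_abs.continuousAt
    simpa using this.mono_left nhdsWithin_le_nhds
  exact squeeze_zero_norm' hb hg

lemma one_sub_cos_div_sq_tendsto :
    Filter.Tendsto (fun s : ℝ => (1 - Real.cos s) / s ^ 2)
      (nhdsWithin 0 {0}ᶜ) (nhds (1/2 : ℝ)) := by
  have h := (Complex.continuous_re.tendsto _).comp g_div_sq_tendsto
  have heq : ∀ s : ℝ, s ≠ 0 →
      ((Complex.exp (I * s) - 1 - I * s) / (s : ℂ) ^ 2).re = (Real.cos s - 1) / s ^ 2 := by
    intro s hs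
    have : ((s : ℂ) ^ 2) = ((s ^ 2 : ℝ) : ℂ) := by push_cast; ring
    rw [this, Complex.div_ofReal_re]
    congr 1
    simp [Complex.sub_re, Complex.exp_re, Complex.mul_re]
  have h' : Filter.Tendsto (Complex.re ∘ fun s : ℝ => (Complex.exp (I * s) - 1 - I * s) / (s : ℂ) ^ 2)
      (nhdsWithin 0 {0}ᶜ) (nhds (-(1/2) : ℝ)) := by simpa using h
  have h2 : Filter.Tendsto (fun s : ℝ => (Real.cos s - 1) / s ^ 2)
      (nhdsWithin 0 {0}ᶜ) (nhds (-(1/2) : ℝ)) := by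
    apply h'.congr'
    filter_upwards [eventually_mem_nhdsWithin] with s hs
    exact heq s hs
  have h3 := h2.neg
  simp only [← neg_div, neg_sub, neg_neg] at h3
  exact h3

section Levy
open MeasureTheory Filter

variable {ν : MeasureTheory.Measure ℝ}


lemma integrand_cast (w z : ℝ) :
    Complex.exp (I * w * z) - 1 - I * w * z
      = Complex.exp (I * ((w * z : ℝ) : ℂ)) - 1 - I * ((w * z : ℝ) : ℂ) := by
  push_cast; ring_nf

lemma integrand_norm_le (w z : ℝ) :
    ‖Complex.exp (I * w * z) - 1 - I * w * z‖ ≤ w ^ 2 * z ^ 2 / 2 := by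
  rw [integrand_cast]
  calc ‖Complex.exp (I * ((w * z : ℝ) : ℂ)) - 1 - I * ((w * z : ℝ) : ℂ)‖
      ≤ (w * z) ^ 2 / 2 := g_bound (w * z)
    _ = w ^ 2 * z ^ 2 / 2 := by ring

lemma integrand_integrable (hM : Integrable (fun z : ℝ => z ^ 2) ν) (w : ℝ) :
    Integrable (fun z : ℝ => Complex.exp (I * w * z) - 1 - I * w * z) ν := by
  apply Integrable.mono' ((hM.const_mul (w ^ 2 / 2)).congr ?_)
  · apply Continuous.aestronglyMeasurable
    continuity
  · filter_upwards with z
    calc ‖Complex.exp (I * w * z) - 1 - I * w * z‖ ≤ w ^ 2 * z ^ 2 / 2 :=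
      integrand_norm_le w z
    _ = w ^ 2 / 2 * z ^ 2 := by ring
  · filter_upwards with z; ring

lemma levy_norm_le (hM : Integrable (fun z : ℝ => z ^ 2) ν) (w : ℝ) :
    ‖levyExponent ν w‖ ≤ w ^ 2 / 2 * ∫ z : ℝ, z ^ 2 ∂ν := by
  calc ‖levyExponent ν w‖ ≤ ∫ z : ℝ, ‖Complex.exp (I * w * z) - 1 - I * w * z‖ ∂ν :=
    norm_integral_le_integral_norm _
  _ ≤ ∫ z : ℝ, w ^ 2 / 2 * z ^ 2 ∂ν := by
      apply integral_mono ((integrand_integrable hM w).norm)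
        ((hM.const_mul (w ^ 2 / 2)).congr (by filter_upwards with z; ring))
      intro z
      calc ‖Complex.exp (I * w * z) - 1 - I * w * z‖ ≤ w ^ 2 * z ^ 2 / 2 :=
        integrand_norm_le w z
      _ = w ^ 2 / 2 * z ^ 2 := by ring
  _ = w ^ 2 / 2 * ∫ z : ℝ, z ^ 2 ∂ν := integral_const_mul _ _

lemma levy_continuous (hM : Integrable (fun z : ℝ => z ^ 2) ν) :
    Continuous (levyExponent ν) := by
  rw [continuous_iff_continuousAt]
  intro w₀
  apply MeasureTheory.continuousAt_of_dominated
    (bound := fun z => (|w₀| + 1) ^ 2 * z ^ 2 / 2)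
  · filter_upwards with w
    apply Continuous.aestronglyMeasurable; continuity
  · have hev : ∀ᶠ w : ℝ in nhds w₀, |w| ≤ |w₀| + 1 := by
      have := eventually_abs_sub_lt w₀ (one_pos)
      filter_upwards [this] with w hw
      calc |w| = |w₀ + (w - w₀)| := by ring_nf
      _ ≤ |w₀| + |w - w₀| := abs_add_le _ _
      _ ≤ |w₀| + 1 := by linarith
    filter_upwards [hev] with w hw
    filter_upwards with z
    calc ‖Complex.exp (I * w * z) - 1 - I * w * z‖ ≤ w ^ 2 * z ^ 2 / 2 :=
      integrand_norm_le w z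
    _ ≤ (|w₀| + 1) ^ 2 * z ^ 2 / 2 := by
        have h1 : w ^ 2 ≤ (|w₀| + 1) ^ 2 := by
          rw [← _root_.sq_abs w]
          apply pow_le_pow_left₀ (abs_nonneg w) hw
        nlinarith [sq_nonneg z]
  · exact (hM.const_mul ((|w₀| + 1) ^ 2 / 2)).congr (by filter_upwards with z; ring)
  · filter_upwards with z
    apply Continuous.continuousAt; continuity

end Levy

section Levy2
open MeasureTheory Filter

variable {ν : MeasureTheory.Measure ℝ}

lemma mul_tendsto_punctured {c : ℝ} (hc : c ≠ 0) :
    Tendsto (fun t : ℝ => t * c) (nhdsWithin 0 {0}ᶜ) (nhdsWithin 0 {0}ᶜ) := by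
  apply tendsto_nhdsWithin_of_tendsto_nhds_of_eventually_within
  · have : Tendsto (fun t : ℝ => t * c) (nhds 0) (nhds (0 * c)) :=
      (continuous_mul_right c).tendsto 0
    simpa using this.mono_left nhdsWithin_le_nhds
  · filter_upwards [eventually_mem_nhdsWithin] with t (ht : t ≠ 0)
    exact mul_ne_zero ht hc

lemma levy_div_sq_tendsto (hM : Integrable (fun z : ℝ => z ^ 2) ν) (w : ℝ) :
    Tendsto (fun t : ℝ => levyExponent ν (t * w) / (t : ℂ) ^ 2)
      (nhdsWithin 0 {0}ᶜ)
      (nhds (-(1/2) * ((w ^ 2 * ∫ z : ℝ, z ^ 2 ∂ν : ℝ) : ℂ))) := by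
  have hkey : ∀ t : ℝ, levyExponent ν (t * w) / (t : ℂ) ^ 2
      = ∫ z : ℝ, (Complex.exp (I * (t * w : ℝ) * z) - 1 - I * (t * w : ℝ) * z) / (t : ℂ) ^ 2 ∂ν :=
    fun t => (integral_div _ _).symm
  simp only [hkey]
  have hint : (-(1/2) * ((w ^ 2 * ∫ z : ℝ, z ^ 2 ∂ν : ℝ) : ℂ))
      = ∫ z : ℝ, -(1/2 : ℂ) * ((w ^ 2 * z ^ 2 : ℝ) : ℂ) ∂ν := by
    rw [integral_const_mul]
    congr 1
    have h := (integral_ofReal (𝕜 := ℂ) (f := fun z : ℝ => w ^ 2 * z ^ 2) (μ := ν))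
    have h2 : (∫ z : ℝ, ((w ^ 2 * z ^ 2 : ℝ) : ℂ) ∂ν) = (((∫ z : ℝ, w ^ 2 * z ^ 2 ∂ν : ℝ)) : ℂ) := h
    rw [h2, ← integral_const_mul]
  rw [hint]
  apply tendsto_integral_filter_of_dominated_convergence
    (bound := fun z : ℝ => w ^ 2 * z ^ 2 / 2)
  · filter_upwards with t
    apply Continuous.aestronglyMeasurable; continuity
  · filter_upwards [eventually_mem_nhdsWithin] with t (ht : t ≠ 0)
    filter_upwards with z
    rw [norm_div]
    have hden : ‖(t : ℂ) ^ 2‖ = t ^ 2 := by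
      rw [norm_pow, Complex.norm_real, Real.norm_eq_abs, _root_.sq_abs]
    rw [hden, div_le_iff₀ (by positivity)]
    calc ‖Complex.exp (I * (t * w : ℝ) * z) - 1 - I * (t * w : ℝ) * z‖
        ≤ (t * w) ^ 2 * z ^ 2 / 2 := integrand_norm_le (t * w) z
      _ = w ^ 2 * z ^ 2 / 2 * t ^ 2 := by ring
  · exact (hM.const_mul (w ^ 2 / 2)).congr (by filter_upwards with z; ring)
  · filter_upwards with z
    rcases eq_or_ne (w * z) 0 with hwz | hwz
    · have hz : ∀ t : ℝ, (Complex.exp (I * (t * w : ℝ) * z) - 1 - I * (t * w : ℝ) * z) / (t : ℂ) ^ 2 = 0 := by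
        intro t
        have h0 : (w : ℂ) * (z : ℂ) = 0 := by
          rw [← Complex.ofReal_mul, hwz, Complex.ofReal_zero]
        simp [Complex.ofReal_mul, mul_assoc, h0]
      simp only [hz]
      have : -(1/2 : ℂ) * ((w ^ 2 * z ^ 2 : ℝ) : ℂ) = 0 := by
        have : w ^ 2 * z ^ 2 = (w * z) ^ 2 := by ring
        rw [this, hwz]
        simp
      rw [this]
      exact tendsto_const_nhds
    · have hcomp := g_div_sq_tendsto.comp (mul_tendsto_punctured hwz)
      have hmul := hcomp.mul_const (((w * z : ℝ) : ℂ) ^ 2)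
      have hlim : -(1/2 : ℂ) * ((w ^ 2 * z ^ 2 : ℝ) : ℂ) = -(1/2 : ℂ) * ((w * z : ℝ) : ℂ) ^ 2 := by
        push_cast; ring
      rw [hlim]
      apply hmul.congr'
      filter_upwards [eventually_mem_nhdsWithin] with t (ht : t ≠ 0)
      have htC : (t : ℂ) ≠ 0 := Complex.ofReal_ne_zero.mpr ht
      have hwzC : ((w * z : ℝ) : ℂ) ≠ 0 := Complex.ofReal_ne_zero.mpr hwz
      show (Complex.exp (I * ((t * (w * z) : ℝ) : ℂ)) - 1 - I * ((t * (w * z) : ℝ) : ℂ))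
          / ((t * (w * z) : ℝ) : ℂ) ^ 2 * ((w * z : ℝ) : ℂ) ^ 2
        = (Complex.exp (I * ((t * w : ℝ) : ℂ) * (z : ℂ)) - 1 - I * ((t * w : ℝ) : ℂ) * (z : ℂ)) / (t : ℂ) ^ 2
      rw [show I * ((t * w : ℝ) : ℂ) * (z : ℂ) = I * ((t * (w * z) : ℝ) : ℂ) by push_cast; ring]
      rw [show ((t * (w * z) : ℝ) : ℂ) ^ 2 = (t : ℂ) ^ 2 * ((w * z : ℝ) : ℂ) ^ 2 by push_cast; ring]
      rw [div_mul_eq_mul_div, div_eq_div_iff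
        (mul_ne_zero (pow_ne_zero 2 htC) (pow_ne_zero 2 hwzC)) (pow_ne_zero 2 htC)]
      ring

end Levy2


section Outer
open MeasureTheory Filter

lemma schwartz_sq_integrable {n : ℕ} (φ : SchwartzMap (En n) ℝ) :
    Integrable (fun x : En n => φ x ^ 2) (volume : Measure (En n)) := by
  obtain ⟨C, hC⟩ := φ.decay 0 0
  simp only [pow_zero, one_mul, norm_iteratedFDeriv_zero] at hC
  have h := φ.integrable (μ := (volume : Measure (En n)))
  apply (h.bdd_mul φ.continuous.aestronglyMeasurable (c := C) (ae_of_all _ fun x => hC.2 x)).congr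
  filter_upwards with x
  ring

lemma outer_tendsto {n : ℕ} (ν : Measure ℝ) (hM : Integrable (fun z : ℝ => z ^ 2) ν)
    (φ : SchwartzMap (En n) ℝ) :
    Tendsto (fun t : ℝ => (∫ x : En n, levyExponent ν (t * φ x)) / (t : ℂ) ^ 2)
      (nhdsWithin 0 {0}ᶜ)
      (nhds (-(1/2) * (((∫ z : ℝ, z ^ 2 ∂ν) * ∫ x : En n, φ x ^ 2 : ℝ) : ℂ))) := by
  set M : ℝ := ∫ z : ℝ, z ^ 2 ∂ν with hMdef
  have hM0 : 0 ≤ M := integral_nonneg (fun z => sq_nonneg z)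
  have hkey : ∀ t : ℝ, (∫ x : En n, levyExponent ν (t * φ x)) / (t : ℂ) ^ 2
      = ∫ x : En n, levyExponent ν (t * φ x) / (t : ℂ) ^ 2 :=
    fun t => (integral_div _ _).symm
  simp only [hkey]
  have hint : (-(1/2) * ((M * ∫ x : En n, φ x ^ 2 : ℝ) : ℂ))
      = ∫ x : En n, -(1/2 : ℂ) * ((φ x ^ 2 * M : ℝ) : ℂ) := by
    rw [integral_const_mul]
    congr 1
    have h := (integral_ofReal (𝕜 := ℂ) (f := fun x : En n => φ x ^ 2 * M)
      (μ := (volume : Measure (En n))))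
    have h2 : (∫ x : En n, ((φ x ^ 2 * M : ℝ) : ℂ))
        = (((∫ x : En n, φ x ^ 2 * M) : ℝ) : ℂ) := h
    rw [h2, integral_mul_const]
    push_cast
    ring
  rw [hint]
  have hcont := levy_continuous (ν := ν) hM
  apply tendsto_integral_filter_of_dominated_convergence
    (bound := fun x : En n => M / 2 * φ x ^ 2)
  · filter_upwards with t
    apply Continuous.aestronglyMeasurable
    exact (hcont.comp ((continuous_const.mul φ.continuous))).div_const _
  · filter_upwards [eventually_mem_nhdsWithin] with t (ht : t ≠ 0)
    filter_upwards with x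
    rw [norm_div]
    have hden : ‖(t : ℂ) ^ 2‖ = t ^ 2 := by
      rw [norm_pow, Complex.norm_real, Real.norm_eq_abs, _root_.sq_abs]
    rw [hden, div_le_iff₀ (by positivity)]
    calc ‖levyExponent ν (t * φ x)‖ ≤ (t * φ x) ^ 2 / 2 * M := levy_norm_le hM _
      _ = M / 2 * φ x ^ 2 * t ^ 2 := by ring
  · exact ((schwartz_sq_integrable φ).const_mul (M / 2))
  · filter_upwards with x
    have h := levy_div_sq_tendsto (ν := ν) hM (φ x)
    have : -(1/2 : ℂ) * ((φ x ^ 2 * M : ℝ) : ℂ)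
        = -(1/2 : ℂ) * (((φ x) ^ 2 * M : ℝ) : ℂ) := rfl
    rw [this]
    exact h

end Outer

theorem variance_pairing
    (n : ℕ) (hn : 1 ≤ n)
    (ν : Measure ℝ) (hν0 : ν {0} = 0)
    (hM : Integrable (fun z : ℝ => z ^ 2) ν)
    (M : ℝ) (hMdef : M = ∫ z : ℝ, z ^ 2 ∂ν)
    (P : Measure (WNSpace n)) [IsProbabilityMeasure P]
    (hBM : ∀ φ : SchwartzMap (En n) ℝ,
      ∫ ω : WNSpace n, Complex.exp (Complex.I * (ω φ : ℝ)) ∂P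
        = Complex.exp (∫ x : En n, levyExponent ν (φ x))) :
    ∀ φ : SchwartzMap (En n) ℝ,
      ∫ ω : WNSpace n, (ω φ) ^ 2 ∂P = M * ∫ x : En n, (φ x) ^ 2 := by
  intro φ
  have hBorel : BorelSpace (WNSpace n) := ⟨rfl⟩
  set X : WNSpace n → ℝ := fun ω => ω φ with hX
  have hXcont : Continuous X := WeakDual.eval_continuous φ
  have hXmeas : Measurable X := hXcont.measurable
  set Iφ : ℝ := ∫ x : En n, φ x ^ 2 with hIφ
  set A : ℝ → ℂ := fun s => ∫ x : En n, levyExponent ν (s * φ x) with hA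
  -- the sequence t k = 1/(k+1)
  set t : ℕ → ℝ := fun k => 1 / ((k : ℝ) + 1) with ht
  have htpos : ∀ k, 0 < t k := fun k => by positivity
  have htne : ∀ k, t k ≠ 0 := fun k => (htpos k).ne'
  have htk : Tendsto t atTop (nhdsWithin 0 {0}ᶜ) := by
    apply tendsto_nhdsWithin_of_tendsto_nhds_of_eventually_within
    · exact tendsto_one_div_add_atTop_nhds_zero_nat
    · filter_upwards with k
      exact htne k
  -- characteristic function identity
  have hchar : ∀ s : ℝ, ∫ ω, Complex.exp (I * ((s * X ω : ℝ) : ℂ)) ∂P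
      = Complex.exp (A s) := by
    intro s
    have h := hBM (s • φ)
    have h1 : ∀ ω : WNSpace n, ω (s • φ) = s * ω φ := fun ω => by
      rw [map_smul, smul_eq_mul]
    have h2 : ∀ x, (s • φ) x = s * φ x := fun x => rfl
    simp only [h1, h2] at h
    exact h
  -- integrability of the integrand of the characteristic function
  have hexpcont : ∀ s : ℝ, Continuous (fun ω : WNSpace n =>
      Complex.exp (I * ((s * X ω : ℝ) : ℂ))) := by
    intro s
    exact Complex.continuous_exp.comp (continuous_const.mul
      (Complex.continuous_ofReal.comp (continuous_const.mul hXcont)))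
  have hexp_int : ∀ s : ℝ, Integrable
      (fun ω : WNSpace n => Complex.exp (I * ((s * X ω : ℝ) : ℂ))) P := by
    intro s
    apply Integrable.mono' (integrable_const (1 : ℝ)) (hexpcont s).aestronglyMeasurable
    filter_upwards with ω
    rw [Complex.norm_exp]
    simp
  have hcos_int : ∀ s : ℝ, Integrable (fun ω : WNSpace n => Real.cos (s * X ω)) P := by
    intro s
    apply Integrable.mono' (integrable_const (1 : ℝ))
    · exact (Real.continuous_cos.comp (continuous_const.mul hXcont)).aestronglyMeasurable
    · filter_upwards with ω
      rw [Real.norm_eq_abs]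
      exact Real.abs_cos_le_one _
  -- real part identity
  have hcos : ∀ s : ℝ, ∫ ω, (1 - Real.cos (s * X ω)) ∂P
      = 1 - (Complex.exp (A s)).re := by
    intro s
    have hre : ∫ ω, Real.cos (s * X ω) ∂P = (Complex.exp (A s)).re := by
      have hint2 : (∫ ω, (Complex.exp (I * ((s * X ω : ℝ) : ℂ))).re ∂P)
          = (∫ ω, Complex.exp (I * ((s * X ω : ℝ) : ℂ)) ∂P).re := integral_re (hexp_int s)
      rw [← hchar s, ← hint2]
      apply integral_congr_ae
      filter_upwards with ω
      rw [show I * ((s * X ω : ℝ) : ℂ) = ((s * X ω : ℝ) : ℂ) * I from mul_comm _ _]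
      rw [Complex.exp_ofReal_mul_I_re]
    rw [integral_sub (integrable_const 1) (hcos_int s), integral_const, hre]
    simp
  -- limit of A t / t^2
  have hAlim : Tendsto (fun k => A (t k) / ((t k : ℝ) : ℂ) ^ 2) atTop
      (nhds (-(1/2) * ((M * Iφ : ℝ) : ℂ))) := by
    have h := (outer_tendsto ν hM φ).comp htk
    rw [hMdef]
    exact h
  -- A (t k) tends to 0
  have htsq : Tendsto (fun k => ((t k : ℝ) : ℂ) ^ 2) atTop (nhds 0) := by
    have h0 : Tendsto t atTop (nhds (0 : ℝ)) := htk.mono_right nhdsWithin_le_nhds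
    have h1 : Tendsto (fun k => ((t k : ℝ) : ℂ)) atTop (nhds ((0 : ℝ) : ℂ)) :=
      (Complex.continuous_ofReal.tendsto _).comp h0
    have := h1.pow 2
    simpa using this
  have hA0 : Tendsto (fun k => A (t k)) atTop (nhds 0) := by
    have h := hAlim.mul htsq
    have heq : ∀ k, A (t k) / ((t k : ℝ) : ℂ) ^ 2 * ((t k : ℝ) : ℂ) ^ 2 = A (t k) := by
      intro k
      have : ((t k : ℝ) : ℂ) ≠ 0 := Complex.ofReal_ne_zero.mpr (htne k)
      field_simp
    rw [show (fun k => A (t k) / ((t k : ℝ) : ℂ) ^ 2 * ((t k : ℝ) : ℂ) ^ 2) = fun k => A (t k)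
      from funext heq] at h
    simpa using h
  -- limit of (1 - exp (A t))/t^2
  have hchi : Tendsto (fun k => (1 - Complex.exp (A (t k))) / ((t k : ℝ) : ℂ) ^ 2) atTop
      (nhds ((1/2) * ((M * Iφ : ℝ) : ℂ))) := by
    have hrem : Tendsto (fun k => (Complex.exp (A (t k)) - 1 - A (t k)) / ((t k : ℝ) : ℂ) ^ 2)
        atTop (nhds 0) := by
      have hnlim : Tendsto (fun k => ‖A (t k)‖) atTop (nhds 0) := by
        simpa using hA0.norm
      have hev : ∀ᶠ k in atTop, ‖A (t k)‖ < 1 := hnlim.eventually_lt_const one_pos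
      have hb : ∀ᶠ k in atTop,
          ‖(Complex.exp (A (t k)) - 1 - A (t k)) / ((t k : ℝ) : ℂ) ^ 2‖
            ≤ ‖A (t k) / ((t k : ℝ) : ℂ) ^ 2‖ ^ 2 * (t k) ^ 2 := by
        filter_upwards [hev] with k hk
        rw [norm_div]
        have hden : ‖((t k : ℝ) : ℂ) ^ 2‖ = (t k) ^ 2 := by
          rw [norm_pow, Complex.norm_real, Real.norm_eq_abs, _root_.sq_abs]
        rw [hden, div_le_iff₀ (by positivity)]
        calc ‖Complex.exp (A (t k)) - 1 - A (t k)‖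
            ≤ ‖A (t k)‖ ^ 2 := Complex.norm_exp_sub_one_sub_id_le hk.le
          _ = (‖A (t k)‖ / (t k) ^ 2) ^ 2 * (t k) ^ 2 * (t k) ^ 2 := by
              have : t k ≠ 0 := htne k
              field_simp
              try ring
          _ = ‖A (t k) / ((t k : ℝ) : ℂ) ^ 2‖ ^ 2 * (t k) ^ 2 * (t k) ^ 2 := by
              rw [norm_div, hden]
      have hg : Tendsto (fun k => ‖A (t k) / ((t k : ℝ) : ℂ) ^ 2‖ ^ 2 * (t k) ^ 2) atTop
          (nhds 0) := by
        have h1 : Tendsto (fun k => ‖A (t k) / ((t k : ℝ) : ℂ) ^ 2‖ ^ 2) atTop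
            (nhds (‖-(1/2) * ((M * Iφ : ℝ) : ℂ)‖ ^ 2)) := (hAlim.norm.pow 2)
        have h2 : Tendsto (fun k => (t k) ^ 2) atTop (nhds 0) := by
          have h0 : Tendsto t atTop (nhds (0 : ℝ)) := htk.mono_right nhdsWithin_le_nhds
          simpa using h0.pow 2
        simpa using h1.mul h2
      exact squeeze_zero_norm' hb hg
    have heq : ∀ k, (1 - Complex.exp (A (t k))) / ((t k : ℝ) : ℂ) ^ 2
        = -(A (t k) / ((t k : ℝ) : ℂ) ^ 2)
          - (Complex.exp (A (t k)) - 1 - A (t k)) / ((t k : ℝ) : ℂ) ^ 2 := by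
      intro k
      have hne : ((t k : ℝ) : ℂ) ^ 2 ≠ 0 := pow_ne_zero 2 (Complex.ofReal_ne_zero.mpr (htne k))
      field_simp
      try ring
    rw [show (fun k => (1 - Complex.exp (A (t k))) / ((t k : ℝ) : ℂ) ^ 2)
        = fun k => -(A (t k) / ((t k : ℝ) : ℂ) ^ 2)
          - (Complex.exp (A (t k)) - 1 - A (t k)) / ((t k : ℝ) : ℂ) ^ 2 from funext heq]
    have := hAlim.neg.sub hrem
    simpa using this
  -- real version
  have hre : Tendsto (fun k => (1 - (Complex.exp (A (t k))).re) / (t k) ^ 2) atTop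
      (nhds ((1/2) * (M * Iφ))) := by
    have h := (Complex.continuous_re.tendsto _).comp hchi
    have heq : ∀ k, ((1 - Complex.exp (A (t k))) / ((t k : ℝ) : ℂ) ^ 2).re
        = (1 - (Complex.exp (A (t k))).re) / (t k) ^ 2 := by
      intro k
      rw [show ((t k : ℝ) : ℂ) ^ 2 = (((t k) ^ 2 : ℝ) : ℂ) by push_cast; ring,
        Complex.div_ofReal_re]
      try congr 1
      try simp
    have h2 : ((1/2 : ℂ) * ((M * Iφ : ℝ) : ℂ)).re = (1/2) * (M * Iφ) := by
      rw [show (1/2 : ℂ) * ((M * Iφ : ℝ) : ℂ) = (((1/2) * (M * Iφ) : ℝ) : ℂ) by push_cast; ring]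
      rw [Complex.ofReal_re]
    rw [← h2]
    apply h.congr
    intro k
    exact heq k
  -- the integrals of the cosine approximants
  set G : ℕ → WNSpace n → ℝ := fun k ω => 2 * (1 - Real.cos (t k * X ω)) / (t k) ^ 2 with hG
  have hGnonneg : ∀ k ω, 0 ≤ G k ω := by
    intro k ω
    have h1 : Real.cos (t k * X ω) ≤ 1 := Real.cos_le_one _
    apply div_nonneg (by nlinarith) (by positivity)
  have hGle : ∀ k ω, G k ω ≤ X ω ^ 2 := by
    intro k ω
    have h1 : 1 - (t k * X ω) ^ 2 / 2 ≤ Real.cos (t k * X ω) :=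
      Real.one_sub_sq_div_two_le_cos
    rw [hG]
    rw [div_le_iff₀ (by positivity : (0:ℝ) < (t k) ^ 2)]
    nlinarith [sq_nonneg (X ω), sq_nonneg (t k)]
  have hGcont : ∀ k, Continuous (G k) := by
    intro k
    apply Continuous.div_const
    exact continuous_const.mul (continuous_const.sub
      (Real.continuous_cos.comp (continuous_const.mul hXcont)))
  have hGint : ∀ k, Integrable (G k) P := by
    intro k
    apply Integrable.mono' (integrable_const (4 / (t k) ^ 2))
      (hGcont k).aestronglyMeasurable
    filter_upwards with ω
    rw [Real.norm_eq_abs, _root_.abs_of_nonneg (hGnonneg k ω)]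
    have h1 : -1 ≤ Real.cos (t k * X ω) := Real.neg_one_le_cos _
    rw [hG, div_le_div_iff₀ (by positivity) (by positivity)]
    nlinarith [sq_nonneg (t k)]
  have hGval : ∀ k, ∫ ω, G k ω ∂P = 2 * (1 - (Complex.exp (A (t k))).re) / (t k) ^ 2 := by
    intro k
    calc ∫ ω, G k ω ∂P
        = ∫ ω, 2 / (t k) ^ 2 * (1 - Real.cos (t k * X ω)) ∂P := by
          apply integral_congr_ae
          filter_upwards with ω
          rw [hG]
          ring
      _ = 2 / (t k) ^ 2 * ∫ ω, (1 - Real.cos (t k * X ω)) ∂P := integral_const_mul _ _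
      _ = 2 * (1 - (Complex.exp (A (t k))).re) / (t k) ^ 2 := by
          rw [hcos (t k)]
          ring
  have hGtendsto : Tendsto (fun k => ∫ ω, G k ω ∂P) atTop (nhds (M * Iφ)) := by
    have h := (hre.const_mul (2 : ℝ))
    have h2 : (2 : ℝ) * ((1/2) * (M * Iφ)) = M * Iφ := by ring
    rw [h2] at h
    apply h.congr
    intro k
    rw [hGval k]
    ring
  -- pointwise convergence G k ω → X ω ^ 2
  have hGptwise : ∀ ω, Tendsto (fun k => G k ω) atTop (nhds (X ω ^ 2)) := by
    intro ω
    rcases eq_or_ne (X ω) 0 with h0 | h0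
    · have : ∀ k, G k ω = 0 := by
        intro k
        rw [hG]
        simp [h0]
      rw [show (fun k => G k ω) = fun _ => (0:ℝ) from funext this, h0]
      simpa using tendsto_const_nhds
    · have hcomp : Tendsto (fun k => t k * X ω) atTop (nhdsWithin 0 {0}ᶜ) :=
        (mul_tendsto_punctured h0).comp htk
      have h := (one_sub_cos_div_sq_tendsto.comp hcomp).mul_const (2 * X ω ^ 2)
      have h2 : (1/2 : ℝ) * (2 * X ω ^ 2) = X ω ^ 2 := by ring
      rw [h2] at h
      apply h.congr
      intro k
      show (1 - Real.cos (t k * X ω)) / (t k * X ω) ^ 2 * (2 * X ω ^ 2) = G k ω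
      rw [hG]
      field_simp
  -- integrability of X ^ 2 via Fatou
  have hXsq_meas : Measurable (fun ω => X ω ^ 2) := (hXmeas.pow_const 2)
  have hXsq_int : Integrable (fun ω => X ω ^ 2) P := by
    have hfatou : ∫⁻ ω, ENNReal.ofReal (X ω ^ 2) ∂P
        ≤ Filter.liminf (fun k => ∫⁻ ω, ENNReal.ofReal (G k ω) ∂P) atTop := by
      have hlim : ∀ ω, Filter.liminf (fun k => ENNReal.ofReal (G k ω)) atTop
          = ENNReal.ofReal (X ω ^ 2) := by
        intro ω
        exact ((ENNReal.continuous_ofReal.tendsto _).comp (hGptwise ω)).liminf_eq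
      calc ∫⁻ ω, ENNReal.ofReal (X ω ^ 2) ∂P
          = ∫⁻ ω, Filter.liminf (fun k => ENNReal.ofReal (G k ω)) atTop ∂P := by
            apply lintegral_congr
            intro ω
            rw [hlim ω]
        _ ≤ Filter.liminf (fun k => ∫⁻ ω, ENNReal.ofReal (G k ω) ∂P) atTop :=
            lintegral_liminf_le (fun k =>
              ENNReal.measurable_ofReal.comp (hGcont k).measurable)
    have hval : ∀ k, ∫⁻ ω, ENNReal.ofReal (G k ω) ∂P = ENNReal.ofReal (∫ ω, G k ω ∂P) := by
      intro k
      refine (ofReal_integral_eq_lintegral_ofReal (hGint k) ?_).symm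
      filter_upwards with ω
      exact hGnonneg k ω
    have hliminf : Filter.liminf (fun k => ∫⁻ ω, ENNReal.ofReal (G k ω) ∂P) atTop
        = ENNReal.ofReal (M * Iφ) := by
      simp only [hval]
      exact ((ENNReal.continuous_ofReal.tendsto _).comp hGtendsto).liminf_eq
    rw [hliminf] at hfatou
    constructor
    · exact hXsq_meas.aestronglyMeasurable
    · rw [hasFiniteIntegral_iff_norm]
      calc ∫⁻ ω, ENNReal.ofReal ‖X ω ^ 2‖ ∂P
          = ∫⁻ ω, ENNReal.ofReal (X ω ^ 2) ∂P := by
            apply lintegral_congr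
            intro ω
            rw [Real.norm_eq_abs, _root_.abs_of_nonneg (sq_nonneg _)]
        _ ≤ ENNReal.ofReal (M * Iφ) := hfatou
        _ < ⊤ := ENNReal.ofReal_lt_top
  -- dominated convergence
  have hDCT : Tendsto (fun k => ∫ ω, G k ω ∂P) atTop (nhds (∫ ω, X ω ^ 2 ∂P)) := by
    apply tendsto_integral_of_dominated_convergence (fun ω => X ω ^ 2)
      (fun k => (hGcont k).aestronglyMeasurable) hXsq_int
    · intro k
      filter_upwards with ω
      rw [Real.norm_eq_abs, _root_.abs_of_nonneg (hGnonneg k ω)]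
      exact hGle k ω
    · filter_upwards with ω
      exact hGptwise ω
  have := tendsto_nhds_unique hDCT hGtendsto
  rw [hX] at this
  exact this
end
end

section
/- For every x = (x₁, …, x_n) ∈ ℝ₊ⁿ, the random variable L̃(x) := T(χ_{∏_{j=1}^n [0,x_j]}) is infinitely divisible with Lévy exponent (∏_{j=1}^n x_j)·Ψ: its characteristic function is ∫_Ω e^{i u L̃(x)(ω)} P(dω) = exp( (∏_{j=1}^n x_j) · ∫_ℝ (e^{iuz} − 1 − iuz) ν(dz) ) for every u ∈ ℝ. -/
open MeasureTheory Complex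

noncomputable section

open Filter Topology

lemma bd1 (t : ℝ) : ‖Complex.exp (Complex.I * t) - 1‖ ≤ 2 * |t| := by
  rcases le_or_gt |t| 1 with h | h
  · have := Complex.norm_exp_sub_one_le (x := Complex.I * t) (by simpa using h)
    simpa using this
  · have h1 : ‖Complex.exp (Complex.I * t)‖ = 1 := by
      rw [mul_comm]
      simpa using Complex.norm_exp_ofReal_mul_I t
    calc ‖Complex.exp (Complex.I * t) - 1‖ ≤ ‖Complex.exp (Complex.I * t)‖ + ‖(1:ℂ)‖ :=
          norm_sub_le _ _
    _ = 2 := by rw [h1]; norm_num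
    _ ≤ 2 * |t| := by nlinarith
lemma bd2 (t : ℝ) : ‖Complex.exp (Complex.I * t) - 1 - Complex.I * t‖ ≤ 3 * t ^ 2 := by
  rcases le_or_gt |t| 1 with h | h
  · have := Complex.norm_exp_sub_one_sub_id_le (x := Complex.I * t) (by simpa using h)
    have h2 : ‖Complex.I * (t:ℂ)‖ ^ 2 = t ^ 2 := by
      rw [norm_mul]; simp [_root_.sq_abs]
    calc ‖Complex.exp (Complex.I * t) - 1 - Complex.I * t‖ ≤ ‖Complex.I * (t:ℂ)‖ ^ 2 :=
        this
    _ = t ^ 2 := h2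
    _ ≤ 3 * t ^ 2 := by nlinarith
  · have h1 : ‖Complex.exp (Complex.I * t)‖ = 1 := by
      rw [mul_comm]; simpa using Complex.norm_exp_ofReal_mul_I t
    have h2 : ‖Complex.I * (t:ℂ)‖ = |t| := by
      rw [norm_mul]; simp
    have ht : (1:ℝ) ≤ |t| := h.le
    calc ‖Complex.exp (Complex.I * t) - 1 - Complex.I * t‖
        ≤ ‖Complex.exp (Complex.I * t) - 1‖ + ‖Complex.I * (t:ℂ)‖ := norm_sub_le _ _
    _ ≤ (‖Complex.exp (Complex.I * t)‖ + ‖(1:ℂ)‖) + |t| := by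
        gcongr ?_ + ?_; · exact norm_sub_le _ _
        · exact h2.le
    _ = 2 + |t| := by rw [h1]; norm_num
    _ ≤ 3 * t ^ 2 := by nlinarith [_root_.sq_abs t, sq_nonneg (|t| - 1)]

lemma intnd_norm_le (w z : ℝ) :
    ‖Complex.exp (Complex.I * w * z) - 1 - Complex.I * w * z‖ ≤ 3 * w ^ 2 * z ^ 2 := by
  have h : (Complex.I * w * z : ℂ) = Complex.I * ((w * z : ℝ) : ℂ) := by push_cast; ring
  rw [h]
  calc ‖Complex.exp (Complex.I * ((w*z:ℝ):ℂ)) - 1 - Complex.I * ((w*z:ℝ):ℂ)‖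
      ≤ 3 * (w*z) ^ 2 := bd2 (w*z)
  _ = 3 * w ^ 2 * z ^ 2 := by ring

lemma intnd_cont (w : ℝ) :
    Continuous (fun z : ℝ => Complex.exp (Complex.I * w * z) - 1 - Complex.I * w * z) := by
  fun_prop

lemma intnd_cont' (z : ℝ) :
    Continuous (fun w : ℝ => Complex.exp (Complex.I * w * z) - 1 - Complex.I * w * z) := by
  fun_prop

lemma psi_integrable {ν : Measure ℝ} (hM : Integrable (fun z : ℝ => z ^ 2) ν) (w : ℝ) :
    Integrable (fun z : ℝ => Complex.exp (Complex.I * w * z) - 1 - Complex.I * w * z) ν := by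
  refine Integrable.mono (hM.const_mul (3 * w ^ 2)) ((intnd_cont w).aestronglyMeasurable) ?_
  refine Filter.Eventually.of_forall fun z => ?_
  calc ‖Complex.exp (Complex.I * w * z) - 1 - Complex.I * w * z‖ ≤ 3 * w ^ 2 * z ^ 2 :=
      intnd_norm_le w z
  _ ≤ ‖3 * w ^ 2 * z ^ 2‖ := le_abs_self _

lemma psi_norm_le {ν : Measure ℝ} (hM : Integrable (fun z : ℝ => z ^ 2) ν) (w : ℝ) :
    ‖levyExponent ν w‖ ≤ 3 * w ^ 2 * ∫ z : ℝ, z ^ 2 ∂ν := by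
  calc ‖levyExponent ν w‖
      ≤ ∫ z : ℝ, ‖Complex.exp (Complex.I * w * z) - 1 - Complex.I * w * z‖ ∂ν :=
        norm_integral_le_integral_norm _
  _ ≤ ∫ z : ℝ, 3 * w ^ 2 * z ^ 2 ∂ν := by
      refine integral_mono ((psi_integrable hM w).norm) (hM.const_mul _) fun z => intnd_norm_le w z
  _ = 3 * w ^ 2 * ∫ z : ℝ, z ^ 2 ∂ν := integral_const_mul _ _

lemma psi_zero {ν : Measure ℝ} : levyExponent ν 0 = 0 := by
  unfold levyExponent
  simp

lemma psi_continuous {ν : Measure ℝ} (hM : Integrable (fun z : ℝ => z ^ 2) ν) :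
    Continuous (levyExponent ν) := by
  rw [continuous_iff_continuousAt]
  intro w₀
  refine MeasureTheory.continuousAt_of_dominated
    (bound := fun z => 3 * (|w₀| + 1) ^ 2 * z ^ 2) ?_ ?_ (hM.const_mul _) ?_
  · exact Filter.Eventually.of_forall fun w => (intnd_cont w).aestronglyMeasurable
  · filter_upwards [Metric.ball_mem_nhds w₀ one_pos] with w hw
    refine Filter.Eventually.of_forall fun z => ?_
    have hww : |w| ≤ |w₀| + 1 := by
      have := abs_sub_abs_le_abs_sub w w₀
      have hd : |w - w₀| < 1 := by simpa [Real.dist_eq] using hw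
      linarith
    calc ‖Complex.exp (Complex.I * w * z) - 1 - Complex.I * w * z‖ ≤ 3 * w ^ 2 * z ^ 2 :=
        intnd_norm_le w z
    _ ≤ 3 * (|w₀| + 1) ^ 2 * z ^ 2 := by
        have h1 : w ^ 2 ≤ (|w₀| + 1) ^ 2 := by
          rw [← _root_.sq_abs w]
          exact pow_le_pow_left₀ (abs_nonneg w) hww 2
        nlinarith [sq_nonneg z]
  · exact Filter.Eventually.of_forall fun z => (intnd_cont' z).continuousAt

/-- A smooth compactly supported function is a Schwartz function. -/
def schwartzOfCS {E : Type*} [NormedAddCommGroup E] [NormedSpace ℝ E] (f : E → ℝ)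
    (hf : ContDiff ℝ ((⊤ : ℕ∞) : WithTop ℕ∞) f) (h : HasCompactSupport f) : SchwartzMap E ℝ where
  toFun := f
  smooth' := hf
  decay' := by
    intro k m
    have hg : Continuous fun x : E => ‖x‖ ^ k * ‖iteratedFDeriv ℝ m f x‖ :=
      ((continuous_norm.pow k).mul (hf.continuous_iteratedFDeriv (by exact_mod_cast le_top)).norm)
    have hgs : HasCompactSupport fun x : E => ‖x‖ ^ k * ‖iteratedFDeriv ℝ m f x‖ :=
      ((h.iteratedFDeriv m).norm).mul_left
    obtain ⟨C, hC⟩ := hg.bounded_above_of_compact_support hgs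
    refine ⟨C, fun x => ?_⟩
    have := hC x
    rwa [Real.norm_eq_abs, _root_.abs_of_nonneg (by positivity)] at this

@[simp] lemma schwartzOfCS_apply {E : Type*} [NormedAddCommGroup E] [NormedSpace ℝ E]
    (f : E → ℝ) (hf : ContDiff ℝ ((⊤ : ℕ∞) : WithTop ℕ∞) f) (h : HasCompactSupport f) (y : E) :
    schwartzOfCS f hf h y = f y := rfl

/-- Smooth bump approximating the indicator of `[0, c]`. -/
def bumpF (c : ℝ) (hc : 0 ≤ c) (k : ℕ) : ContDiffBump (c / 2) :=
  ⟨c / 2 + 1 / (2 * ((k : ℝ) + 1)), c / 2 + 1 / ((k : ℝ) + 1),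
    by positivity,
    by
      have h : (0:ℝ) < (k : ℝ) + 1 := by positivity
      have := one_div_lt_one_div_of_lt h (by linarith : (k:ℝ) + 1 < 2 * ((k:ℝ) + 1))
      linarith⟩

lemma bumpF_one {c : ℝ} (hc : 0 ≤ c) (k : ℕ) {t : ℝ} (h0 : 0 ≤ t) (h1 : t ≤ c) :
    bumpF c hc k t = 1 := by
  apply ContDiffBump.one_of_mem_closedBall
  rw [Metric.mem_closedBall, Real.dist_eq]
  have h2 : (0:ℝ) < 1 / (2 * ((k:ℝ) + 1)) := by positivity
  rw [abs_le]
  constructor <;> [skip; skip] <;> simp only [bumpF] <;> [linarith; linarith]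

lemma bumpF_zero {c : ℝ} (hc : 0 ≤ c) (k : ℕ) {t : ℝ}
    (h : t ≤ -(1 / ((k:ℝ) + 1)) ∨ c + 1 / ((k:ℝ) + 1) ≤ t) :
    bumpF c hc k t = 0 := by
  apply ContDiffBump.zero_of_le_dist
  rw [Real.dist_eq]
  show c / 2 + 1 / ((k:ℝ) + 1) ≤ |t - c / 2|
  rcases h with h | h
  · refine le_trans ?_ (neg_le_abs _)
    linarith
  · refine le_trans ?_ (le_abs_self _)
    linarith

lemma bumpF_supp {c : ℝ} (hc : 0 ≤ c) (k : ℕ) {t : ℝ} (h : bumpF c hc k t ≠ 0) :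
    -1 ≤ t ∧ t ≤ c + 1 := by
  have hs := (bumpF c hc k).support_eq
  have ht : t ∈ Function.support (bumpF c hc k) := h
  rw [hs, Metric.mem_ball, Real.dist_eq, abs_lt] at ht
  have hk : 1 / ((k:ℝ) + 1) ≤ 1 := by
    rw [div_le_one (by positivity)]
    simp
  constructor
  · have := ht.1
    simp only [bumpF] at this
    linarith
  · have := ht.2
    simp only [bumpF] at this
    linarith

lemma bumpF_tendsto {c : ℝ} (hc : 0 ≤ c) (t : ℝ) :
    Filter.Tendsto (fun k : ℕ => bumpF c hc k t) Filter.atTop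
      (nhds (if 0 ≤ t ∧ t ≤ c then (1:ℝ) else 0)) := by
  by_cases hmem : 0 ≤ t ∧ t ≤ c
  · simp only [hmem, if_true]
    exact tendsto_const_nhds.congr fun k => (bumpF_one hc k hmem.1 hmem.2).symm
  · simp only [hmem, if_false]
    rcases not_and_or.mp hmem with h | h
    · push_neg at h
      obtain ⟨K, hK⟩ := exists_nat_one_div_lt (show (0:ℝ) < -t by linarith)
      refine tendsto_const_nhds.congr' ?_
      filter_upwards [Filter.eventually_ge_atTop K] with k hk
      refine (bumpF_zero hc k (Or.inl ?_)).symm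
      have h2 : 1 / ((k:ℝ)+1) ≤ 1 / ((K:ℝ)+1) := by
        apply one_div_le_one_div_of_le (by positivity)
        have : (K:ℝ) ≤ (k:ℝ) := by exact_mod_cast hk
        linarith
      linarith
    · push_neg at h
      obtain ⟨K, hK⟩ := exists_nat_one_div_lt (show (0:ℝ) < t - c by linarith)
      refine tendsto_const_nhds.congr' ?_
      filter_upwards [Filter.eventually_ge_atTop K] with k hk
      refine (bumpF_zero hc k (Or.inr ?_)).symm
      have h2 : 1 / ((k:ℝ)+1) ≤ 1 / ((K:ℝ)+1) := by
        apply one_div_le_one_div_of_le (by positivity)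
        have : (K:ℝ) ≤ (k:ℝ) := by exact_mod_cast hk
        linarith
      linarith

/-- The approximating smooth function on `ℝⁿ`. -/
def Phi {n : ℕ} (x : Fin n → ℝ) (hx : ∀ j, 0 ≤ x j) (k : ℕ) : EuclideanSpace ℝ (Fin n) → ℝ :=
  fun y => ∏ j, bumpF (x j) (hx j) k (y j)

lemma Phi_contDiff {n : ℕ} (x : Fin n → ℝ) (hx : ∀ j, 0 ≤ x j) (k : ℕ) :
    ContDiff ℝ ((⊤ : ℕ∞) : WithTop ℕ∞) (Phi x hx k) := by
  apply contDiff_prod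
  intro j _
  have h := ((bumpF (x j) (hx j) k).contDiff (n := (⊤ : ℕ∞))).comp
    (EuclideanSpace.proj j : EuclideanSpace ℝ (Fin n) →L[ℝ] ℝ).contDiff
  exact h

lemma Phi_nonneg {n : ℕ} (x : Fin n → ℝ) (hx : ∀ j, 0 ≤ x j) (k : ℕ)
    (y : EuclideanSpace ℝ (Fin n)) : 0 ≤ Phi x hx k y :=
  Finset.prod_nonneg fun j _ => (bumpF (x j) (hx j) k).nonneg

lemma Phi_le_one {n : ℕ} (x : Fin n → ℝ) (hx : ∀ j, 0 ≤ x j) (k : ℕ)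
    (y : EuclideanSpace ℝ (Fin n)) : Phi x hx k y ≤ 1 :=
  Finset.prod_le_one (fun j _ => (bumpF (x j) (hx j) k).nonneg)
    (fun j _ => (bumpF (x j) (hx j) k).le_one)

/-- The big compact box containing all the supports. -/
def bigK {n : ℕ} (x : Fin n → ℝ) : Set (EuclideanSpace ℝ (Fin n)) :=
  {y | ∀ j, y j ∈ Set.Icc (-1 : ℝ) (x j + 1)}

lemma bigK_eq {n : ℕ} (x : Fin n → ℝ) :
    bigK x = (⇑(EuclideanSpace.equiv (Fin n) ℝ)) ⁻¹'
      (Set.pi Set.univ fun j => Set.Icc (-1 : ℝ) (x j + 1)) := by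
  ext y
  simp [bigK, Set.mem_pi, Pi.le_def, forall_and]

lemma bigK_compact {n : ℕ} (x : Fin n → ℝ) : IsCompact (bigK x) := by
  rw [bigK_eq]
  have h : IsCompact (Set.pi Set.univ fun j => Set.Icc (-1 : ℝ) (x j + 1)) :=
    isCompact_univ_pi fun j => isCompact_Icc
  exact (EuclideanSpace.equiv (Fin n) ℝ).toHomeomorph.isCompact_preimage.mpr h

lemma Phi_zero_outside {n : ℕ} (x : Fin n → ℝ) (hx : ∀ j, 0 ≤ x j) (k : ℕ)
    (y : EuclideanSpace ℝ (Fin n)) (hy : y ∉ bigK x) : Phi x hx k y = 0 := by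
  simp only [bigK, Set.mem_setOf_eq, not_forall] at hy
  obtain ⟨j, hj⟩ := hy
  apply Finset.prod_eq_zero (Finset.mem_univ j)
  by_contra h
  exact hj (Set.mem_Icc.mpr (bumpF_supp (hx j) k h))

lemma Phi_tendsto {n : ℕ} (x : Fin n → ℝ) (hx : ∀ j, 0 ≤ x j)
    (y : EuclideanSpace ℝ (Fin n)) :
    Filter.Tendsto (fun k : ℕ => Phi x hx k y) Filter.atTop
      (nhds (Set.indicator {y' : EuclideanSpace ℝ (Fin n) | ∀ j, 0 ≤ y' j ∧ y' j ≤ x j}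
        (fun _ => (1:ℝ)) y)) := by
  have h : Filter.Tendsto (fun k : ℕ => Phi x hx k y) Filter.atTop
      (nhds (∏ j, if 0 ≤ y j ∧ y j ≤ x j then (1:ℝ) else 0)) :=
    tendsto_finset_prod _ fun j _ => bumpF_tendsto (hx j) (y j)
  convert h using 2
  by_cases hy : y ∈ {y' : EuclideanSpace ℝ (Fin n) | ∀ j, 0 ≤ y' j ∧ y' j ≤ x j}
  · rw [Set.indicator_of_mem hy]
    exact (Finset.prod_eq_one fun j _ =>
      (show (if 0 ≤ y j ∧ y j ≤ x j then (1:ℝ) else 0) = 1 from if_pos (hy j))).symm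
  · rw [Set.indicator_of_notMem hy]
    simp only [Set.mem_setOf_eq, not_forall] at hy
    obtain ⟨j, hj⟩ := hy
    exact ((Finset.prod_eq_zero (Finset.mem_univ j)
      (show (if 0 ≤ y j ∧ y j ≤ x j then (1:ℝ) else 0) = 0 from if_neg hj))).symm

lemma box_closed {n : ℕ} (x : Fin n → ℝ) :
    IsClosed {y : En n | ∀ j, 0 ≤ y j ∧ y j ≤ x j} := by
  have : {y : En n | ∀ j, 0 ≤ y j ∧ y j ≤ x j}
      = ⋂ j, ((fun y : En n => y j) ⁻¹' Set.Icc 0 (x j)) := by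
    ext y; simp [Set.mem_Icc]
  rw [this]
  exact isClosed_iInter fun j =>
    (isClosed_Icc).preimage (EuclideanSpace.proj j : En n →L[ℝ] ℝ).continuous

lemma box_subset_bigK {n : ℕ} (x : Fin n → ℝ) :
    {y : En n | ∀ j, 0 ≤ y j ∧ y j ≤ x j} ⊆ bigK x := by
  intro y hy j
  exact Set.mem_Icc.mpr ⟨by linarith [(hy j).1], by linarith [(hy j).2]⟩

lemma box_volume {n : ℕ} (x : Fin n → ℝ) (hx : ∀ j, 0 ≤ x j) :
    (volume {y : En n | ∀ j, 0 ≤ y j ∧ y j ≤ x j}).toReal = ∏ j, x j := by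
  have hset : {y : En n | ∀ j, 0 ≤ y j ∧ y j ≤ x j}
      = (MeasurableEquiv.toLp 2 (Fin n → ℝ)).symm ⁻¹'
        (Set.pi Set.univ fun j => Set.Icc 0 (x j)) := by
    ext y
    simp [Set.mem_pi, MeasurableEquiv.coe_toLp_symm, Set.mem_Icc, forall_and, Pi.le_def]
  rw [hset, (EuclideanSpace.volume_preserving_symm_measurableEquiv_toLp (Fin n)).measure_preimage
    (MeasurableSet.univ_pi fun j => measurableSet_Icc).nullMeasurableSet]
  rw [volume_pi_pi]
  simp only [Real.volume_Icc, sub_zero]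
  rw [ENNReal.toReal_prod]
  exact Finset.prod_congr rfl fun j _ => ENNReal.toReal_ofReal (hx j)

lemma norm_exp_I_mul (a b : ℝ) : ‖Complex.exp (Complex.I * a * b)‖ = 1 := by
  rw [Complex.norm_exp]
  simp [Complex.mul_re]

lemma exp_diff_le (u a b : ℝ) :
    ‖Complex.exp (Complex.I * u * a) - Complex.exp (Complex.I * u * b)‖ ≤ 2 * |u| * |a - b| := by
  have h : Complex.exp (Complex.I * u * a) - Complex.exp (Complex.I * u * b)
      = Complex.exp (Complex.I * u * b) * (Complex.exp (Complex.I * ((u * (a - b) : ℝ) : ℂ)) - 1) := by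
    rw [mul_sub, ← Complex.exp_add, mul_one]
    push_cast
    ring_nf
  rw [h, norm_mul, norm_exp_I_mul, one_mul]
  calc ‖Complex.exp (Complex.I * ((u * (a - b) : ℝ) : ℂ)) - 1‖ ≤ 2 * |u * (a - b)| :=
      bd1 (u * (a - b))
  _ = 2 * |u| * |a - b| := by rw [abs_mul]; ring

lemma int_exp {α : Type*} [MeasurableSpace α] (μ : Measure α) [IsProbabilityMeasure μ]
    (u : ℝ) (f : α → ℝ) (hf : AEStronglyMeasurable f μ) :
    Integrable (fun ω => Complex.exp (Complex.I * u * f ω)) μ := by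
  refine Integrable.mono' (integrable_const 1) ?_ ?_
  · exact Complex.continuous_exp.comp_aestronglyMeasurable
      (((Complex.continuous_ofReal.comp_aestronglyMeasurable hf).const_mul (Complex.I * u)))
  · exact Filter.Eventually.of_forall fun ω => le_of_eq (norm_exp_I_mul u (f ω))



set_option maxHeartbeats 1000000 in
theorem levy_sheet_characteristic_function
    (n : ℕ) (hn : 1 ≤ n)
    (ν : Measure ℝ) (hν0 : ν {0} = 0)
    (hM : Integrable (fun z : ℝ => z ^ 2) ν)
    (M : ℝ) (hMdef : M = ∫ z : ℝ, z ^ 2 ∂ν)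
    (P : Measure (WNSpace n)) [IsProbabilityMeasure P]
    (hBM : ∀ φ : SchwartzMap (En n) ℝ,
      ∫ ω : WNSpace n, Complex.exp (Complex.I * (ω φ : ℝ)) ∂P
        = Complex.exp (∫ x : En n, levyExponent ν (φ x)))
    -- T : L²(ℝⁿ) → L²(Ω,P) is the continuous linear extension of φ ↦ ⟨·,φ⟩ :
    (T : Lp ℝ 2 (volume : Measure (En n)) →L[ℝ] Lp ℝ 2 P)
    (hT : ∀ (φ : SchwartzMap (En n) ℝ) (g : Lp ℝ 2 (volume : Measure (En n))),
      (⇑g =ᵐ[volume] fun x => φ x) → (⇑(T g) =ᵐ[P] fun ω : WNSpace n => ω φ))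
    (hTiso : ∀ f : Lp ℝ 2 (volume : Measure (En n)), ‖T f‖ ^ 2 = M * ‖f‖ ^ 2)
    -- x ∈ ℝ₊ⁿ and χ = (the L²-class of) the indicator of ∏_{j=1}^n [0, x_j],
    -- so that L̃(x) = T χ :
    (x : Fin n → ℝ) (hx : ∀ j, 0 ≤ x j)
    (χ : Lp ℝ 2 (volume : Measure (En n)))
    (hχ : ⇑χ =ᵐ[volume]
      Set.indicator {y : En n | ∀ j, 0 ≤ y j ∧ y j ≤ x j} (fun _ => (1 : ℝ))) :
    ∀ u : ℝ,
      ∫ ω : WNSpace n, Complex.exp (Complex.I * u * (T χ ω : ℝ)) ∂P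
        = Complex.exp ((∏ j, x j) *
            ∫ z : ℝ, (Complex.exp (Complex.I * u * z) - 1 - Complex.I * u * z) ∂ν) := by
  intro u
  have hM0 : 0 ≤ ∫ z : ℝ, z ^ 2 ∂ν := integral_nonneg fun z => sq_nonneg z
  set box := {y : En n | ∀ j, 0 ≤ y j ∧ y j ≤ x j} with hbox
  have hboxmeas : MeasurableSet box := (box_closed x).measurableSet
  set ind : En n → ℝ := Set.indicator box (fun _ => (1 : ℝ)) with hind
  have hind01 : ∀ y, 0 ≤ ind y ∧ ind y ≤ 1 := by
    intro y
    by_cases hy : y ∈ box <;> simp [hind, hy]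
  have hCS : ∀ k, HasCompactSupport (Phi x hx k) := fun k =>
    HasCompactSupport.intro (bigK_compact x) (Phi_zero_outside x hx k)
  set Φ : ℕ → SchwartzMap (En n) ℝ := fun k => schwartzOfCS _ (Phi_contDiff x hx k) (hCS k)
    with hΦ
  have hmem : ∀ k, MemLp (Phi x hx k) 2 (volume : Measure (En n)) := fun k =>
    ((Phi_contDiff x hx k).continuous).memLp_of_hasCompactSupport (hCS k)
  set φL : ℕ → Lp ℝ 2 (volume : Measure (En n)) := fun k => (hmem k).toLp _ with hφL
  -- L² convergence of the approximants
  have hbigKint : Integrable (Set.indicator (bigK x) fun _ => (1:ℝ)) (volume : Measure (En n)) := by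
    rw [integrable_indicator_iff (bigK_compact x).measurableSet]
    exact integrableOn_const (bigK_compact x).measure_lt_top.ne
  have hmeas_ind : AEStronglyMeasurable ind (volume : Measure (En n)) :=
    (measurable_const.indicator hboxmeas).aestronglyMeasurable
  have hind_zero : ∀ y ∉ bigK x, ind y = 0 := fun y hy =>
    Set.indicator_of_notMem (fun hmem' => hy (box_subset_bigK x hmem')) _
  have hL2sq : Tendsto (fun k => ∫ y, (Phi x hx k y - ind y) * (Phi x hx k y - ind y)) atTop
      (𝓝 0) := by
    have h0 : (0:ℝ) = ∫ y : En n, (0:ℝ) := by simp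
    rw [h0]
    refine tendsto_integral_of_dominated_convergence
      (Set.indicator (bigK x) fun _ => (1:ℝ)) (fun k => ?_) hbigKint (fun k => ?_) ?_
    · exact (((Phi_contDiff x hx k).continuous.aestronglyMeasurable.sub hmeas_ind).mul
        ((Phi_contDiff x hx k).continuous.aestronglyMeasurable.sub hmeas_ind))
    · refine Eventually.of_forall fun y => ?_
      by_cases hy : y ∈ bigK x
      · rw [Set.indicator_of_mem hy]
        have h1 := Phi_nonneg x hx k y
        have h2 := Phi_le_one x hx k y
        have h3 := (hind01 y).1
        have h4 := (hind01 y).2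
        rw [Real.norm_eq_abs, abs_mul]
        have h5 : |Phi x hx k y - ind y| ≤ 1 := by
          rw [abs_le]; constructor <;> linarith
        nlinarith [abs_nonneg (Phi x hx k y - ind y)]
      · rw [Set.indicator_of_notMem hy, Phi_zero_outside x hx k y hy, hind_zero y hy]
        simp
    · refine Eventually.of_forall fun y => ?_
      have h := (Phi_tendsto x hx y).sub (tendsto_const_nhds (x := ind y))
      convert h.mul h using 2
      exact (mul_self_eq_zero.mpr (sub_self _)).symm
  have hnorm : ∀ k, ‖φL k - χ‖ ^ 2 = ∫ y, (Phi x hx k y - ind y) * (Phi x hx k y - ind y) := by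
    intro k
    have h1 : ⇑(φL k - χ) =ᵐ[volume] fun y => Phi x hx k y - ind y :=
      (Lp.coeFn_sub _ _).trans (((hmem k).coeFn_toLp).sub hχ)
    rw [← real_inner_self_eq_norm_sq, MeasureTheory.L2.inner_def]
    refine integral_congr_ae ?_
    filter_upwards [h1] with y hy
    simp only [RCLike.inner_apply, conj_trivial]
    rw [hy]
  have hL2 : Tendsto (fun k => ‖φL k - χ‖) atTop (𝓝 0) := by
    have h2 : Tendsto (fun k => ‖φL k - χ‖ ^ 2) atTop (𝓝 0) :=
      hL2sq.congr fun k => (hnorm k).symm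
    have h3 := (Real.continuous_sqrt.tendsto' 0 0 (by simp)).comp h2
    refine h3.congr fun k => ?_
    simp [Real.sqrt_sq (norm_nonneg _)]
  -- characteristic functions of the approximants
  have hAB : ∀ k, (∫ ω : WNSpace n, Complex.exp (Complex.I * u * ((T (φL k)) ω : ℝ)) ∂P)
      = Complex.exp (∫ y : En n, levyExponent ν (u * Phi x hx k y)) := by
    intro k
    have h2 : ⇑(T (φL k)) =ᵐ[P] fun ω : WNSpace n => ω (Φ k) :=
      hT (Φ k) (φL k) (((hmem k).coeFn_toLp).trans (Eventually.of_forall fun y => rfl))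
    have h1 := hBM (u • Φ k)
    calc (∫ ω : WNSpace n, Complex.exp (Complex.I * u * ((T (φL k)) ω : ℝ)) ∂P)
        = ∫ ω : WNSpace n, Complex.exp (Complex.I * ((ω (u • Φ k) : ℝ) : ℂ)) ∂P := by
          refine integral_congr_ae ?_
          filter_upwards [h2] with ω hω
          rw [hω]
          have h3 : ω (u • Φ k) = u * ω (Φ k) := by rw [_root_.map_smul]; rfl
          rw [h3]
          push_cast
          ring_nf
      _ = Complex.exp (∫ y : En n, levyExponent ν ((u • Φ k) y)) := h1
      _ = Complex.exp (∫ y : En n, levyExponent ν (u * Phi x hx k y)) := by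
          congr 1
  -- limit of the left-hand sides
  have hAlim : Tendsto (fun k => ∫ ω : WNSpace n,
        Complex.exp (Complex.I * u * ((T (φL k)) ω : ℝ)) ∂P) atTop
      (𝓝 (∫ ω : WNSpace n, Complex.exp (Complex.I * u * ((T χ) ω : ℝ)) ∂P)) := by
    have hMnn : 0 ≤ M := hMdef ▸ hM0
    rw [tendsto_iff_norm_sub_tendsto_zero]
    have key : ∀ k, ‖(∫ ω : WNSpace n, Complex.exp (Complex.I * u * ((T (φL k)) ω : ℝ)) ∂P)
        - ∫ ω : WNSpace n, Complex.exp (Complex.I * u * ((T χ) ω : ℝ)) ∂P‖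
        ≤ (2 * |u| * Real.sqrt M) * ‖φL k - χ‖ := by
      intro k
      have hf1 : Integrable (fun ω : WNSpace n =>
          Complex.exp (Complex.I * u * ((T (φL k)) ω : ℝ))) P :=
        int_exp P u _ (Lp.aestronglyMeasurable _)
      have hf2 : Integrable (fun ω : WNSpace n =>
          Complex.exp (Complex.I * u * ((T χ) ω : ℝ))) P :=
        int_exp P u _ (Lp.aestronglyMeasurable _)
      set d := T (φL k) - T χ with hd
      have hdfn : ⇑d =ᵐ[P] fun ω => (T (φL k)) ω - (T χ) ω := Lp.coeFn_sub _ _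
      have hdint : Integrable (⇑d) P := (Lp.memLp d).integrable (by norm_num)
      have hdi : Integrable (fun ω : WNSpace n => ‖(T (φL k)) ω - (T χ) ω‖) P :=
        (hdint.congr hdfn).norm
      have hdsq : ∫ ω, ‖d ω‖ ^ (2:ℝ) ∂P = ‖d‖ ^ 2 := by
        rw [← real_inner_self_eq_norm_sq, MeasureTheory.L2.inner_def]
        refine integral_congr_ae (Eventually.of_forall fun ω => ?_)
        simp only [RCLike.inner_apply, conj_trivial]
        rw [show (2:ℝ) = ((2:ℕ):ℝ) by norm_num, Real.rpow_natCast, pow_two,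
          Real.norm_eq_abs, abs_mul_abs_self]
      have hHolder : ∫ ω, ‖(T (φL k)) ω - (T χ) ω‖ ∂P ≤ ‖d‖ := by
        have h2 : ENNReal.ofReal (2:ℝ) = 2 := by norm_num
        have hmem2 : MemLp (fun ω : WNSpace n => ‖d ω‖) (ENNReal.ofReal 2) P := by
          rw [h2]; exact (Lp.memLp d).norm
        have hmem1 : MemLp (fun _ : WNSpace n => (1:ℝ)) (ENNReal.ofReal 2) P := by
          rw [h2]; exact memLp_const 1
        have hh := integral_mul_le_Lp_mul_Lq_of_nonneg (μ := P)
          (Real.holderConjugate_iff.mpr ⟨one_lt_two, by norm_num⟩)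
          (Eventually.of_forall fun ω => norm_nonneg (d ω))
          (Eventually.of_forall fun ω => zero_le_one)
          hmem2 hmem1
        simp only [mul_one] at hh
        have h4 : (∫ ω, (1:ℝ) ^ (2:ℝ) ∂P) = 1 := by
          simp [Real.one_rpow]
        rw [h4, hdsq] at hh
        have h5 : ((‖d‖ ^ 2 : ℝ)) ^ ((1:ℝ)/2) = ‖d‖ := by
          rw [← Real.rpow_natCast ‖d‖ 2, ← Real.rpow_mul (norm_nonneg _)]
          norm_num
        rw [h5] at hh
        calc ∫ ω, ‖(T (φL k)) ω - (T χ) ω‖ ∂P = ∫ ω, ‖d ω‖ ∂P :=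
            (integral_congr_ae (hdfn.mono fun ω hω => by rw [hω])).symm
        _ ≤ ‖d‖ * 1 ^ ((1:ℝ)/2) := hh
        _ = ‖d‖ := by simp
      have hnormT : ‖d‖ = Real.sqrt M * ‖φL k - χ‖ := by
        have hmap : d = T (φL k - χ) := by rw [hd, map_sub]
        rw [hmap]
        have h5 : ‖T (φL k - χ)‖ = Real.sqrt (M * ‖φL k - χ‖ ^ 2) := by
          rw [← hTiso]
          exact (Real.sqrt_sq (norm_nonneg _)).symm
        rw [h5, Real.sqrt_mul hMnn, Real.sqrt_sq (norm_nonneg _)]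
      rw [← integral_sub hf1 hf2]
      calc ‖∫ ω : WNSpace n, (Complex.exp (Complex.I * u * ((T (φL k)) ω : ℝ))
            - Complex.exp (Complex.I * u * ((T χ) ω : ℝ))) ∂P‖
          ≤ ∫ ω : WNSpace n, ‖Complex.exp (Complex.I * u * ((T (φL k)) ω : ℝ))
            - Complex.exp (Complex.I * u * ((T χ) ω : ℝ))‖ ∂P :=
            norm_integral_le_integral_norm _
        _ ≤ ∫ ω : WNSpace n, 2 * |u| * ‖(T (φL k)) ω - (T χ) ω‖ ∂P := by
            refine integral_mono (hf1.sub hf2).norm (hdi.const_mul _) fun ω => ?_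
            calc ‖Complex.exp (Complex.I * u * ((T (φL k)) ω : ℝ))
                - Complex.exp (Complex.I * u * ((T χ) ω : ℝ))‖
                ≤ 2 * |u| * |(T (φL k)) ω - (T χ) ω| := exp_diff_le u _ _
            _ = 2 * |u| * ‖(T (φL k)) ω - (T χ) ω‖ := by rw [Real.norm_eq_abs]
        _ = 2 * |u| * ∫ ω : WNSpace n, ‖(T (φL k)) ω - (T χ) ω‖ ∂P := integral_const_mul _ _
        _ ≤ 2 * |u| * ‖d‖ := by
            exact mul_le_mul_of_nonneg_left hHolder (by positivity)
        _ = (2 * |u| * Real.sqrt M) * ‖φL k - χ‖ := by rw [hnormT]; ring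
    refine squeeze_zero (fun k => norm_nonneg _) key ?_
    simpa using hL2.const_mul (2 * |u| * Real.sqrt M)
  -- limit of the right-hand sides
  have hBint : (∫ y : En n, levyExponent ν (u * ind y))
      = ((∏ j, x j : ℝ) : ℂ) * levyExponent ν u := by
    have heq : (fun y : En n => levyExponent ν (u * ind y))
        = Set.indicator box (fun _ => levyExponent ν u) := by
      funext y
      by_cases hy : y ∈ box
      · rw [Set.indicator_of_mem hy]
        simp [hind, Set.indicator_of_mem hy]
      · rw [Set.indicator_of_notMem hy]
        rw [hind]
        simp only [Set.indicator_of_notMem hy, mul_zero]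
        exact psi_zero
    rw [heq, integral_indicator_const _ hboxmeas]
    rw [show volume.real box = ∏ j, x j from box_volume x hx]
    rw [Complex.real_smul]
  have hBlim : Tendsto (fun k => Complex.exp (∫ y : En n, levyExponent ν (u * Phi x hx k y)))
      atTop (𝓝 (Complex.exp (((∏ j, x j : ℝ) : ℂ) * levyExponent ν u))) := by
    have hbint : Integrable (Set.indicator (bigK x) fun _ => 3 * u ^ 2 * ∫ z : ℝ, z ^ 2 ∂ν)
        (volume : Measure (En n)) := by
      rw [integrable_indicator_iff (bigK_compact x).measurableSet]
      exact integrableOn_const (bigK_compact x).measure_lt_top.ne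
    have hint : Tendsto (fun k => ∫ y : En n, levyExponent ν (u * Phi x hx k y)) atTop
        (𝓝 (∫ y : En n, levyExponent ν (u * ind y))) := by
      refine tendsto_integral_of_dominated_convergence
        (Set.indicator (bigK x) fun _ => 3 * u ^ 2 * ∫ z : ℝ, z ^ 2 ∂ν)
        (fun k => ?_) hbint (fun k => ?_) ?_
      · exact ((psi_continuous hM).comp
          (continuous_const.mul (Phi_contDiff x hx k).continuous)).aestronglyMeasurable
      · refine Eventually.of_forall fun y => ?_
        by_cases hy : y ∈ bigK x
        · rw [Set.indicator_of_mem hy]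
          have h1 := psi_norm_le hM (u * Phi x hx k y)
          have h2 := Phi_nonneg x hx k y
          have h3 := Phi_le_one x hx k y
          calc ‖levyExponent ν (u * Phi x hx k y)‖
              ≤ 3 * (u * Phi x hx k y) ^ 2 * ∫ z : ℝ, z ^ 2 ∂ν := h1
          _ ≤ 3 * u ^ 2 * ∫ z : ℝ, z ^ 2 ∂ν := by
              have hΦsq : (Phi x hx k y) ^ 2 ≤ 1 := by nlinarith
              have h6 := mul_nonneg (mul_nonneg (sq_nonneg u) hM0)
                (by linarith : (0:ℝ) ≤ 1 - (Phi x hx k y) ^ 2)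
              nlinarith [h6, mul_pow u (Phi x hx k y) 2]
        · rw [Set.indicator_of_notMem hy, Phi_zero_outside x hx k y hy]
          simp [psi_zero]
      · refine Eventually.of_forall fun y => ?_
        exact ((psi_continuous hM).continuousAt).tendsto.comp
          ((Phi_tendsto x hx y).const_mul u)
    rw [hBint] at hint
    exact (Complex.continuous_exp.continuousAt).tendsto.comp hint
  have := tendsto_nhds_unique hAlim (hBlim.congr fun k => (hAB k).symm)
  rw [this]
  rfl
end
end
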